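/- arXiv:2007.10197 — 2 statements merged into one kernel-verified Lean document; each statement's English description precedes it below -/
import Mathlib

section
/- For every m ≥ 2 and all indices i_1, …, i_m ∈ {1,…,n}: if i_s = i_t for some s ≠ t, then r_{i_1 i_2 ⋯ i_m} = 0 in V^{⊗m}. -/
open scoped TensorProduct
open PiTensorProduct

namespace OrePaper

variable (k : Type*) [Field k] (V : Type*) [AddCommGroup V] [Module k V]

/-- The canonical isomorphism `V^{⊗a} ⊗ V^{⊗b} ≃ V^{⊗(a+b)}`. -/
noncomputable abbrev mulPow (a b : ℕ) :
    ((⨂[k]^a V) ⊗[k] (⨂[k]^b V)) ≃ₗ[k] ⨂[k]^(a+b) V :=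
  TensorPower.mulEquiv

variable {k V}

/-- Identification of `V` with `V^{⊗1}`. -/
noncomputable def toPow1 : V ≃ₗ[k] ⨂[k]^1 V :=
  (PiTensorProduct.subsingletonEquiv (s := fun _ => V) (0 : Fin 1)).symm

/-- `w ⊗ v ∈ V^{⊗(m+1)}` for `w ∈ V^{⊗m}`, `v ∈ V`. -/
noncomputable def append {m : ℕ} (w : ⨂[k]^m V) (v : V) : ⨂[k]^(m+1) V :=
  mulPow k V m 1 (w ⊗ₜ[k] toPow1 v)

/-- `v ⊗ w ∈ V^{⊗(m+1)}` for `v ∈ V`, `w ∈ V^{⊗m}`. -/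
noncomputable def prepend {m : ℕ} (v : V) (w : ⨂[k]^m V) : ⨂[k]^(m+1) V :=
  TensorPower.cast k V (Nat.add_comm 1 m) (mulPow k V 1 m (toPow1 v ⊗ₜ[k] w))

/-- The elements `r_{i_1 i_2 ⋯ i_m} ∈ V^{⊗m}`:
`r_{i_1 i_2} = x_{i_1} ⊗ x_{i_2} − x_{i_2} ⊗ x_{i_1}` and, recursively for `m ≥ 3`,
`r_{i_1 ⋯ i_m} = ∑_{j=1}^{m} (−1)^{m−j} r_{i_1 ⋯ î_j ⋯ i_m} ⊗ x_{i_j}`.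
(For a single index we set `r_i = x_i`, which is the convention making the left-handed
expansion hold also for `m = 2`.) -/
noncomputable def rElt {n : ℕ} (x : Fin n → V) : (m : ℕ) → (Fin m → Fin n) → ⨂[k]^m V
  | 0, _ => 0
  | 1, ι => toPow1 (x (ι 0))
  | 2, ι => append (toPow1 (x (ι 0))) (x (ι 1)) - append (toPow1 (x (ι 1))) (x (ι 0))
  | (m+3), ι => ∑ j : Fin (m+3),
      ((-1 : k)^((m+2) - (j : ℕ))) • append (rElt x (m+2) (ι ∘ j.succAbove)) (x (ι j))
/-! Auxiliary lemmas -/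


noncomputable def appendL {m : ℕ} (v : V) : (⨂[k]^m V) →ₗ[k] ⨂[k]^(m+1) V :=
  (mulPow k V m 1).toLinearMap ∘ₗ (TensorProduct.mk k _ _).flip (toPow1 v)

lemma append_eq {m : ℕ} (w : ⨂[k]^m V) (v : V) : append w v = appendL v w := rfl

lemma append_zero {m : ℕ} (v : V) : append (0 : ⨂[k]^m V) v = 0 := by
  simp [append_eq]

lemma append_neg {m : ℕ} (w : ⨂[k]^m V) (v : V) : append (-w) v = - append w v := by
  simp [append_eq]

lemma succAbove_val {M : ℕ} (j : Fin (M+1)) (l : Fin M) :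
    ((j.succAbove l : Fin (M+1)) : ℕ) = if (l : ℕ) < (j : ℕ) then (l : ℕ) else (l : ℕ) + 1 := by
  rcases Nat.lt_or_ge (l : ℕ) (j : ℕ) with hc | hc
  · rw [Fin.succAbove, if_pos (by simpa [Fin.lt_def] using hc), if_pos hc, Fin.coe_castSucc]
  · rw [Fin.succAbove, if_neg (by simp only [Fin.lt_def, Fin.coe_castSucc]; omega),
      if_neg (by omega), Fin.val_succ]

lemma swap_val {M : ℕ} (p q x : Fin M) :
    ((Equiv.swap p q x : Fin M) : ℕ) =
      if (x : ℕ) = (p : ℕ) then (q : ℕ) else if (x : ℕ) = (q : ℕ) then (p : ℕ) else (x : ℕ) := by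
  rw [Equiv.swap_apply_def]
  split_ifs <;> simp_all [Fin.ext_iff]

lemma swap_comp_succAbove_left {M : ℕ} (p q : Fin (M+1)) (h : (q : ℕ) = (p : ℕ) + 1) :
    ⇑(Equiv.swap p q) ∘ p.succAbove = q.succAbove := by
  funext l
  apply Fin.ext
  have hl := l.isLt
  have hq := q.isLt
  simp only [Function.comp_apply]
  rw [swap_val, succAbove_val, succAbove_val]
  split_ifs <;> omega

lemma swap_comp_succAbove_right {M : ℕ} (p q : Fin (M+1)) (h : (q : ℕ) = (p : ℕ) + 1) :
    ⇑(Equiv.swap p q) ∘ q.succAbove = p.succAbove := by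
  funext l
  apply Fin.ext
  have hl := l.isLt
  have hq := q.isLt
  simp only [Function.comp_apply]
  rw [swap_val, succAbove_val, succAbove_val]
  split_ifs <;> omega

lemma swap_comp_succAbove_ne {M : ℕ} (p q j : Fin (M+1)) (h : (q : ℕ) = (p : ℕ) + 1)
    (hjp : j ≠ p) (hjq : j ≠ q) :
    ∃ p' q' : Fin M, (q' : ℕ) = (p' : ℕ) + 1 ∧ j.succAbove p' = p ∧ j.succAbove q' = q ∧
      ⇑(Equiv.swap p q) ∘ j.succAbove = j.succAbove ∘ ⇑(Equiv.swap p' q') := by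
  have hq := q.isLt
  have hj := j.isLt
  have hjp' : (j : ℕ) ≠ (p : ℕ) := fun e => hjp (Fin.ext e)
  have hjq' : (j : ℕ) ≠ (q : ℕ) := fun e => hjq (Fin.ext e)
  rcases lt_or_gt_of_ne hjp' with hlt | hgt
  · refine ⟨⟨(p : ℕ) - 1, by omega⟩, ⟨(p : ℕ), by omega⟩, by simp only [Fin.val_mk]; omega, ?_, ?_, ?_⟩
    · apply Fin.ext; rw [succAbove_val]; simp only [Fin.val_mk]; split_ifs <;> omega
    · apply Fin.ext; rw [succAbove_val]; simp only [Fin.val_mk]; split_ifs <;> omega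
    · funext l
      apply Fin.ext
      have hl := l.isLt
      simp only [Function.comp_apply]
      rw [swap_val, succAbove_val, succAbove_val, swap_val]
      simp only [Fin.val_mk]
      split_ifs <;> omega
  · have hgt' : (q : ℕ) < (j : ℕ) := by omega
    refine ⟨⟨(p : ℕ), by omega⟩, ⟨(q : ℕ), by omega⟩, by simp only [Fin.val_mk]; omega, ?_, ?_, ?_⟩
    · apply Fin.ext; rw [succAbove_val]; simp only [Fin.val_mk]; split_ifs <;> omega
    · apply Fin.ext; rw [succAbove_val]; simp only [Fin.val_mk]; split_ifs <;> omega
    · funext l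
      apply Fin.ext
      have hl := l.isLt
      simp only [Function.comp_apply]
      rw [swap_val, succAbove_val, succAbove_val, swap_val]
      simp only [Fin.val_mk]
      split_ifs <;> omega

lemma comp_swap_eq {α : Type*} {M : ℕ} (ι : Fin M → α) (p q : Fin M) (he : ι p = ι q) :
    ι ∘ ⇑(Equiv.swap p q) = ι := by
  funext l
  by_cases hlp : l = p
  · subst hlp; simp [Equiv.swap_apply_left, he]
  by_cases hlq : l = q
  · subst hlq; simp [Equiv.swap_apply_right, he]
  · simp [Equiv.swap_apply_of_ne_of_ne hlp hlq]

section Main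

variable {n : ℕ} (x : Fin n → V)

lemma rElt_succ (m : ℕ) (ι : Fin (m+3) → Fin n) :
    rElt (k := k) x (m+3) ι = ∑ j : Fin (m+3),
      ((-1 : k)^((m+2) - (j : ℕ))) • append (rElt (k := k) x (m+2) (ι ∘ j.succAbove)) (x (ι j)) := rfl

lemma rElt_two (ι : Fin 2 → Fin n) :
    rElt (k := k) x 2 ι
      = append (toPow1 (x (ι 0))) (x (ι 1)) - append (toPow1 (x (ι 1))) (x (ι 0)) := rfl

lemma rElt_swap_adj (m : ℕ) :
    ∀ (ι : Fin (m+2) → Fin n) (p q : Fin (m+2)), (q : ℕ) = (p : ℕ) + 1 →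
      rElt (k := k) x (m+2) (ι ∘ ⇑(Equiv.swap p q)) = - rElt (k := k) x (m+2) ι := by
  induction m with
  | zero =>
    intro ι p q h
    have hq := q.isLt
    have hp : p = 0 := by apply Fin.ext; simp only [Fin.val_zero]; omega
    have hq1 : q = 1 := by apply Fin.ext; simp only [Fin.val_one]; omega
    subst hp; subst hq1
    rw [show ((0:ℕ)+2) = 2 from rfl] at *
    rw [rElt_two, rElt_two]
    simp only [Function.comp_apply, Equiv.swap_apply_left, Equiv.swap_apply_right]
    abel
  | succ m ih =>
    intro ι p q h
    have hq := q.isLt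
    set σ := Equiv.swap p q with hσ
    show rElt (k := k) x (m+3) (ι ∘ ⇑σ) = - rElt (k := k) x (m+3) ι
    rw [rElt_succ, rElt_succ]
    have key : ∀ j : Fin (m+3),
        ((-1 : k)^((m+2) - (j : ℕ))) • append (rElt (k := k) x (m+2) ((ι ∘ ⇑σ) ∘ j.succAbove)) (x ((ι ∘ ⇑σ) j))
        = - (((-1 : k)^((m+2) - ((σ j : Fin (m+3)) : ℕ))) •
            append (rElt (k := k) x (m+2) (ι ∘ (σ j).succAbove)) (x (ι (σ j)))) := by
      intro j
      by_cases hjp : j = p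
      · subst hjp
        have e1 : (ι ∘ ⇑σ) ∘ Fin.succAbove j = ι ∘ Fin.succAbove q := by
          funext l; exact congrArg ι (congrFun (swap_comp_succAbove_left j q h) l)
        have e2 : σ j = q := Equiv.swap_apply_left j q
        rw [e1, e2]
        simp only [Function.comp_apply, e2]
        rw [show m + 2 - (j : ℕ) = (m + 2 - (q : ℕ)) + 1 from by omega, pow_succ,
          mul_neg_one, neg_smul]
      · by_cases hjq : j = q
        · subst hjq
          have e1 : (ι ∘ ⇑σ) ∘ Fin.succAbove j = ι ∘ Fin.succAbove p := by
            funext l; exact congrArg ι (congrFun (swap_comp_succAbove_right p j h) l)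
          have e2 : σ j = p := Equiv.swap_apply_right p j
          rw [e1, e2]
          simp only [Function.comp_apply, e2]
          rw [show m + 2 - (p : ℕ) = (m + 2 - (j : ℕ)) + 1 from by omega, pow_succ,
            mul_neg_one, neg_smul, neg_neg]
        · obtain ⟨p', q', hq'p', hp', hq', hcomp⟩ := swap_comp_succAbove_ne p q j h hjp hjq
          have e2 : σ j = j := Equiv.swap_apply_of_ne_of_ne hjp hjq
          have e1 : (ι ∘ ⇑σ) ∘ Fin.succAbove j = (ι ∘ Fin.succAbove j) ∘ ⇑(Equiv.swap p' q') := by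
            funext l; exact congrArg ι (congrFun hcomp l)
          rw [e1, e2, ih (ι ∘ Fin.succAbove j) p' q' hq'p']
          simp only [Function.comp_apply, e2]
          rw [append_neg, smul_neg]
    calc (∑ j : Fin (m+3),
        ((-1 : k)^((m+2) - (j : ℕ))) • append (rElt (k := k) x (m+2) ((ι ∘ ⇑σ) ∘ j.succAbove)) (x ((ι ∘ ⇑σ) j)))
        = ∑ j : Fin (m+3), - (((-1 : k)^((m+2) - ((σ j : Fin (m+3)) : ℕ))) •
            append (rElt (k := k) x (m+2) (ι ∘ (σ j).succAbove)) (x (ι (σ j)))) :=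
          Finset.sum_congr rfl (fun j _ => key j)
      _ = - ∑ j : Fin (m+3), ((-1 : k)^((m+2) - ((σ j : Fin (m+3)) : ℕ))) •
            append (rElt (k := k) x (m+2) (ι ∘ (σ j).succAbove)) (x (ι (σ j))) := by
          rw [Finset.sum_neg_distrib]
      _ = - ∑ j : Fin (m+3), ((-1 : k)^((m+2) - (j : ℕ))) •
            append (rElt (k := k) x (m+2) (ι ∘ j.succAbove)) (x (ι j)) := by
          rw [Equiv.sum_comp σ (fun j => ((-1 : k)^((m+2) - (j : ℕ))) •
            append (rElt (k := k) x (m+2) (ι ∘ j.succAbove)) (x (ι j)))]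

lemma rElt_adj_eq_zero (m : ℕ) :
    ∀ (ι : Fin (m+2) → Fin n) (p q : Fin (m+2)), (q : ℕ) = (p : ℕ) + 1 → ι p = ι q →
      rElt (k := k) x (m+2) ι = 0 := by
  induction m with
  | zero =>
    intro ι p q h he
    have hq := q.isLt
    have hp : p = 0 := by apply Fin.ext; simp only [Fin.val_zero]; omega
    have hq1 : q = 1 := by apply Fin.ext; simp only [Fin.val_one]; omega
    subst hp; subst hq1
    rw [show ((0:ℕ)+2) = 2 from rfl] at *
    rw [rElt_two, he, sub_self]
  | succ m ih =>
    intro ι p q h he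
    have hq := q.isLt
    have hpq : p ≠ q := fun e => by rw [e] at h; omega
    show rElt (k := k) x (m+3) ι = 0
    rw [rElt_succ]
    have hzero : ∀ j ∈ (Finset.univ : Finset (Fin (m+3))), j ∉ ({p, q} : Finset (Fin (m+3))) →
        ((-1 : k)^((m+2) - (j : ℕ))) • append (rElt (k := k) x (m+2) (ι ∘ j.succAbove)) (x (ι j)) = 0 := by
      intro j _ hj
      simp only [Finset.mem_insert, Finset.mem_singleton, not_or] at hj
      obtain ⟨p', q', hq'p', hp', hq', _⟩ := swap_comp_succAbove_ne p q j h hj.1 hj.2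
      have he' : (ι ∘ Fin.succAbove j) p' = (ι ∘ Fin.succAbove j) q' := by
        simp only [Function.comp_apply, hp', hq', he]
      rw [ih (ι ∘ Fin.succAbove j) p' q' hq'p' he', append_zero, smul_zero]
    rw [← Finset.sum_subset (Finset.subset_univ ({p, q} : Finset (Fin (m+3)))) hzero,
      Finset.sum_pair hpq]
    have e1 : ι ∘ Fin.succAbove p = ι ∘ Fin.succAbove q := by
      conv_lhs => rw [← comp_swap_eq ι p q he]
      funext l; exact congrArg ι (congrFun (swap_comp_succAbove_left p q h) l)
    rw [e1, he, show m + 2 - (p : ℕ) = (m + 2 - (q : ℕ)) + 1 from by omega, pow_succ,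
      mul_neg_one, neg_smul, neg_add_cancel]

lemma rElt_eq_zero_of_lt (m : ℕ) (d : ℕ) :
    ∀ (ι : Fin (m+2) → Fin n) (s t : Fin (m+2)), s < t → (t : ℕ) ≤ (s : ℕ) + 1 + d →
      ι s = ι t → rElt (k := k) x (m+2) ι = 0 := by
  induction d with
  | zero =>
    intro ι s t hst hle he
    exact rElt_adj_eq_zero (k := k) x m ι s t (by rw [Fin.lt_def] at hst; omega) he
  | succ d ih =>
    intro ι s t hst hle he
    rw [Fin.lt_def] at hst
    by_cases hadj : (t : ℕ) = (s : ℕ) + 1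
    · exact rElt_adj_eq_zero (k := k) x m ι s t hadj he
    · have h2 : (s : ℕ) + 2 ≤ (t : ℕ) := by omega
      have ht := t.isLt
      set t' : Fin (m+2) := ⟨(t : ℕ) - 1, by omega⟩ with ht'
      have ht't : (t : ℕ) = (t' : ℕ) + 1 := by simp only [ht', Fin.val_mk]; omega
      set σ := Equiv.swap t' t with hσ
      have hinv : (ι ∘ ⇑σ) ∘ ⇑σ = ι := by
        funext l; simp [hσ, Equiv.swap_apply_self]
      have hswap := rElt_swap_adj (k := k) x m (ι ∘ ⇑σ) t' t ht't
      rw [hinv] at hswap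
      have hs't' : s ≠ t' := fun e => by rw [e] at hst; simp only [ht', Fin.val_mk] at hst; omega
      have hs't : s ≠ t := fun e => by rw [e] at hst; omega
      have hιs : (ι ∘ ⇑σ) s = ι s := by
        simp [hσ, Equiv.swap_apply_of_ne_of_ne hs't' hs't]
      have hιt' : (ι ∘ ⇑σ) t' = ι t := by simp [hσ, Equiv.swap_apply_left]
      have hz : rElt (k := k) x (m+2) (ι ∘ ⇑σ) = 0 := by
        apply ih (ι ∘ ⇑σ) s t'
        · rw [Fin.lt_def]; simp only [ht', Fin.val_mk]; omega
        · simp only [ht', Fin.val_mk]; omega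
        · rw [hιs, hιt', he]
      rw [hz, neg_zero] at hswap
      exact hswap

end Main


/-- **Lemma 4.2(c)**: `r_{i_1 ⋯ i_m} = 0` whenever two of the indices coincide. -/
theorem lemma_4_2_c {n : ℕ} (hn : 2 ≤ n) (b : Module.Basis (Fin n) k V)
    (m : ℕ) (ι : Fin (m+2) → Fin n) (s t : Fin (m+2)) (hst : s ≠ t) (he : ι s = ι t) :
    rElt (k := k) (fun i => b i) (m+2) ι = 0 := by
  rcases Ne.lt_or_gt hst with hlt | hlt
  · exact rElt_eq_zero_of_lt (k := k) (fun i => b i) m (t : ℕ) ι s t hlt (by omega) he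
  · exact rElt_eq_zero_of_lt (k := k) (fun i => b i) m (s : ℕ) ι t s hlt (by omega) he.symm


end OrePaper
end

section
/- Let scalars k^{(i)}_{st} ∈ k be given for 1 ≤ i, s, t ≤ n, and let δ: V → V⊗V be the linear map with δ(x_i) = ∑_{s,t=1}^{n} k^{(i)}_{st} x_s⊗x_t. For m ≥ 2 define linear maps D_{m,r}, D_{m,l}: W_m → V^{⊗(m+1)} on the basis {r_{i_1 ⋯ i_m} : i_1 < ⋯ < i_m} of W_m by D_{m,r}(r_{i_1 ⋯ i_m}) = ∑_{j=1}^{m} ∑_{s,t=1}^{n} k^{(i_j)}_{st} · r_{i_1 ⋯ i_{j−1} s i_{j+1} ⋯ i_m} ⊗ x_t and D_{m,l}(r_{i_1 ⋯ i_m}) = ∑_{j=1}^{m} ∑_{s,t=1}^{n} k^{(i_j)}_{st} · x_s ⊗ r_{i_1 ⋯ i_{j−1} t i_{j+1} ⋯ i_m}, and set D_{1,r} = D_{1,l} = δ. Then for every m ≥ 2, D_{m,r} + (−1)^m D_{m,l} = (id_V ⊗ D_{m−1,r}) + (−1)^m (D_{m−1,l} ⊗ id_V) as linear maps W_m → V^{⊗(m+1)},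 where the right-hand side is well defined because W_m ⊆ V ⊗ W_{m−1} and W_m ⊆ W_{m−1} ⊗ V. -/
open scoped TensorProduct
open PiTensorProduct

namespace OrePaper

variable (k : Type*) [Field k] (V : Type*) [AddCommGroup V] [Module k V]

variable {k V}

/-- The value of the map `D_{m,r}` of Lemma 4.3 on the element `r_{i_1 ⋯ i_m}`:
`D_{m,r}(r_{i_1 ⋯ i_m}) = ∑_{j=1}^{m} ∑_{s,t} k^{(i_j)}_{st} r_{i_1 ⋯ i_{j−1} s i_{j+1} ⋯ i_m} ⊗ x_t`.
(For `m = 1` this is exactly `δ`, so `D_{1,r} = δ`.) -/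
noncomputable def DrVal {n : ℕ} (x : Fin n → V) (K : Fin n → Fin n → Fin n → k)
    (m : ℕ) (ι : Fin m → Fin n) : ⨂[k]^(m+1) V :=
  ∑ j : Fin m, ∑ s : Fin n, ∑ t : Fin n,
    K (ι j) s t • append (rElt x m (Function.update ι j s)) (x t)

/-- The value of the map `D_{m,l}` of Lemma 4.3 on the element `r_{i_1 ⋯ i_m}`:
`D_{m,l}(r_{i_1 ⋯ i_m}) = ∑_{j=1}^{m} ∑_{s,t} k^{(i_j)}_{st} x_s ⊗ r_{i_1 ⋯ i_{j−1} t i_{j+1} ⋯ i_m}`.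
(For `m = 1` this is exactly `δ`, so `D_{1,l} = δ`.) -/
noncomputable def DlVal {n : ℕ} (x : Fin n → V) (K : Fin n → Fin n → Fin n → k)
    (m : ℕ) (ι : Fin m → Fin n) : ⨂[k]^(m+1) V :=
  ∑ j : Fin m, ∑ s : Fin n, ∑ t : Fin n,
    K (ι j) s t • prepend (x s) (rElt x m (Function.update ι j t))

/-! ### Auxiliary lemmas -/

section Aux

variable {n : ℕ}

/-- `toPow1` as a `tprod`. -/
lemma toPow1_eq (v : V) : (toPow1 v : ⨂[k]^1 V) = tprod k (fun _ : Fin 1 => v) := by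
  rw [toPow1, LinearEquiv.symm_apply_eq, subsingletonEquiv_apply_tprod]

lemma append_tprod {m : ℕ} (f : Fin m → V) (v : V) :
    append (PiTensorProduct.tprod k f) v = PiTensorProduct.tprod k (Fin.snoc f v) := by
  have h := TensorPower.tprod_mul_tprod k f (fun _ : Fin 1 => v)
  rw [TensorPower.gMul_def] at h
  rw [append, toPow1_eq, h, Fin.append_right_eq_snoc]

lemma prepend_tprod {m : ℕ} (v : V) (f : Fin m → V) :
    prepend v (PiTensorProduct.tprod k f) = PiTensorProduct.tprod k (Fin.cons v f) := by
  have h := TensorPower.tprod_mul_tprod k (fun _ : Fin 1 => v) f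
  rw [TensorPower.gMul_def] at h
  rw [prepend, toPow1_eq, h, TensorPower.cast_tprod, Fin.append_left_eq_cons]
  exact congr_arg _ (funext fun i => rfl)

/-- `append` as a linear map in its first argument. -/
noncomputable def appendLM (m : ℕ) (v : V) : (⨂[k]^m V) →ₗ[k] ⨂[k]^(m+1) V :=
  (mulPow k V m 1).toLinearMap ∘ₗ
    (TensorProduct.mk k (⨂[k]^m V) (⨂[k]^1 V)).flip (toPow1 v)

lemma append_eq_LM {m : ℕ} (w : ⨂[k]^m V) (v : V) : append w v = appendLM m v w := rfl

/-- `prepend` as a linear map in its second argument. -/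
noncomputable def prependLM (m : ℕ) (v : V) : (⨂[k]^m V) →ₗ[k] ⨂[k]^(m+1) V :=
  (TensorPower.cast k V (Nat.add_comm 1 m)).toLinearMap ∘ₗ
    (mulPow k V 1 m).toLinearMap ∘ₗ (TensorProduct.mk k (⨂[k]^1 V) (⨂[k]^m V)) (toPow1 v)

lemma prepend_eq_LM {m : ℕ} (v : V) (w : ⨂[k]^m V) : prepend v w = prependLM m v w := rfl

lemma append_add {m : ℕ} (w₁ w₂ : ⨂[k]^m V) (v : V) :
    append (w₁ + w₂) v = append w₁ v + append w₂ v := by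
  simp only [append_eq_LM, map_add]

lemma append_smul {m : ℕ} (c : k) (w : ⨂[k]^m V) (v : V) :
    append (c • w) v = c • append w v := by
  simp only [append_eq_LM, map_smul]

lemma append_sum {α : Type*} (s : Finset α) {m : ℕ} (w : α → ⨂[k]^m V) (v : V) :
    append (∑ i ∈ s, w i) v = ∑ i ∈ s, append (w i) v := by
  simp only [append_eq_LM, map_sum]

lemma prepend_add {m : ℕ} (v : V) (w₁ w₂ : ⨂[k]^m V) :
    prepend v (w₁ + w₂) = prepend v w₁ + prepend v w₂ := by
  simp only [prepend_eq_LM, map_add]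

lemma prepend_smul {m : ℕ} (c : k) (v : V) (w : ⨂[k]^m V) :
    prepend v (c • w) = c • prepend v w := by
  simp only [prepend_eq_LM, map_smul]

lemma prepend_sum {α : Type*} (s : Finset α) {m : ℕ} (v : V) (w : α → ⨂[k]^m V) :
    prepend v (∑ i ∈ s, w i) = ∑ i ∈ s, prepend v (w i) := by
  simp only [prepend_eq_LM, map_sum]

lemma prepend_append {m : ℕ} (v u : V) (w : ⨂[k]^m V) :
    prepend v (append w u) = append (prepend v w) u := by
  induction w using PiTensorProduct.induction_on with
  | smul_tprod c f =>
    rw [append_smul, prepend_smul, prepend_smul, append_smul, append_tprod, prepend_tprod,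
      prepend_tprod, append_tprod, Fin.cons_snoc_eq_snoc_cons]
  | add w₁ w₂ h₁ h₂ =>
    rw [append_add, prepend_add, prepend_add, append_add, h₁, h₂]

lemma prepend_toPow1 (v u : V) :
    prepend v ((toPow1 u : ⨂[k]^1 V)) = append (toPow1 v) u := by
  rw [toPow1_eq, toPow1_eq, prepend_tprod, append_tprod]
  congr 1
  funext i
  match i with
  | (0 : Fin 2) => rfl
  | (1 : Fin 2) => simp [Fin.snoc]

/-! ### `Fin` combinatorics -/

lemma succAbove_val_s10 {N : ℕ} (q : Fin (N+1)) (p : Fin N) :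
    ((q.succAbove p : Fin (N+1)) : ℕ) = if (p : ℕ) < (q : ℕ) then (p : ℕ) else (p : ℕ) + 1 := by
  by_cases h : (p : ℕ) < (q : ℕ)
  · rw [Fin.succAbove_of_castSucc_lt q p (by rwa [Fin.lt_def]), if_pos h]
    rfl
  · rw [Fin.succAbove_of_le_castSucc q p (by rw [Fin.le_def]; exact not_lt.1 h), if_neg h]
    rfl

/-- Given `q` and `p`, the index `q'` with `(q.succAbove p).succAbove q' = q`. -/
def auxQ {N : ℕ} (q : Fin (N+2)) (p : Fin (N+1)) : Fin (N+1) :=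
  if h : (q : ℕ) ≤ (p : ℕ) then ⟨(q : ℕ), by have := p.isLt; omega⟩
  else ⟨(q : ℕ) - 1, by have := q.isLt; omega⟩

lemma auxQ_val {N : ℕ} (q : Fin (N+2)) (p : Fin (N+1)) :
    ((auxQ q p : Fin (N+1)) : ℕ) = if (q : ℕ) ≤ (p : ℕ) then (q : ℕ) else (q : ℕ) - 1 := by
  rw [auxQ]; split_ifs <;> rfl

lemma succAbove_auxQ {N : ℕ} (q : Fin (N+2)) (p : Fin (N+1)) :
    (q.succAbove p).succAbove (auxQ q p) = q := by
  apply Fin.ext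
  rw [succAbove_val_s10, succAbove_val_s10, auxQ_val]
  have hq := q.isLt; have hp := p.isLt
  split_ifs <;> omega

lemma auxQ_succAbove_auxQ {N : ℕ} (q : Fin (N+2)) (p : Fin (N+1)) :
    auxQ (q.succAbove p) (auxQ q p) = p := by
  apply Fin.ext
  rw [auxQ_val, succAbove_val_s10, auxQ_val]
  have hq := q.isLt; have hp := p.isLt
  split_ifs <;> omega

lemma succAbove_succAbove_auxQ {N : ℕ} (q : Fin (N+2)) (p : Fin (N+1)) (i : Fin N) :
    q.succAbove (p.succAbove i) = (q.succAbove p).succAbove ((auxQ q p).succAbove i) := by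
  apply Fin.ext
  rw [succAbove_val_s10, succAbove_val_s10, succAbove_val_s10, succAbove_val_s10, succAbove_val_s10, auxQ_val]
  have hq := q.isLt; have hp := p.isLt; have hi := i.isLt
  split_ifs <;> omega

/-- The involution `(q, p) ↦ (q.succAbove p, auxQ q p)` of `Fin (N+2) × Fin (N+1)`. -/
def phiEquiv (N : ℕ) : (Fin (N+2) × Fin (N+1)) ≃ (Fin (N+2) × Fin (N+1)) where
  toFun z := (z.1.succAbove z.2, auxQ z.1 z.2)
  invFun z := (z.1.succAbove z.2, auxQ z.1 z.2)
  left_inv z := by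
    obtain ⟨q, p⟩ := z
    exact Prod.ext (succAbove_auxQ q p) (auxQ_succAbove_auxQ q p)
  right_inv z := by
    obtain ⟨q, p⟩ := z
    exact Prod.ext (succAbove_auxQ q p) (auxQ_succAbove_auxQ q p)

lemma auxQ_sign {N : ℕ} (q : Fin (N+2)) (p : Fin (N+1)) :
    ((N+1) - (q : ℕ)) + (p : ℕ)
      = ((q.succAbove p : Fin (N+2)) : ℕ) + (N - (auxQ q p : ℕ)) := by
  rw [succAbove_val_s10, auxQ_val]
  have hq := q.isLt; have hp := p.isLt
  split_ifs <;> omega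

/-! ### Expansions of `rElt` -/

variable (x : Fin n → V)

lemma rElt_one (ι : Fin 1 → Fin n) : rElt (k := k) x 1 ι = toPow1 (x (ι 0)) := rfl

lemma rElt_right (m : ℕ) (ι : Fin (m+2) → Fin n) :
    rElt (k := k) x (m+2) ι
      = ∑ j : Fin (m+2), ((-1 : k)^((m+1) - (j : ℕ))) •
          append (rElt x (m+1) (ι ∘ j.succAbove)) (x (ι j)) := by
  match m with
  | 0 =>
    have h0 : (0 : Fin 2).succAbove (0 : Fin 1) = 1 := rfl
    have h1 : (1 : Fin 2).succAbove (0 : Fin 1) = 0 := rfl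
    rw [show rElt (k := k) x 2 ι
        = append (toPow1 (x (ι 0))) (x (ι 1)) - append (toPow1 (x (ι 1))) (x (ι 0)) from rfl,
      Fin.sum_univ_two]
    have e1 : ∀ κ : Fin 1 → Fin n, rElt (k := k) x (0+1) κ = toPow1 (x (κ 0)) := fun _ => rfl
    rw [e1, e1]
    simp only [Function.comp_apply, h0, h1]
    norm_num [sub_eq_add_neg, add_comm]
  | (m+1) => rfl

lemma rElt_left (m : ℕ) (ι : Fin (m+2) → Fin n) :
    rElt (k := k) x (m+2) ι
      = ∑ j : Fin (m+2), ((-1 : k)^((j : ℕ))) •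
          prepend (x (ι j)) (rElt x (m+1) (ι ∘ j.succAbove)) := by
  induction m with
  | zero =>
    have h0 : (0 : Fin 2).succAbove (0 : Fin 1) = 1 := rfl
    have h1 : (1 : Fin 2).succAbove (0 : Fin 1) = 0 := rfl
    rw [show rElt (k := k) x 2 ι
        = append (toPow1 (x (ι 0))) (x (ι 1)) - append (toPow1 (x (ι 1))) (x (ι 0)) from rfl,
      Fin.sum_univ_two]
    have e1 : ∀ κ : Fin 1 → Fin n, rElt (k := k) x (0+1) κ = toPow1 (x (κ 0)) := fun _ => rfl
    rw [e1, e1]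
    simp only [Function.comp_apply, h0, h1, prepend_toPow1]
    norm_num [sub_eq_add_neg]
  | succ m IH =>
    have start : rElt (k := k) x (m+3) ι
        = ∑ q : Fin (m+3), ((-1 : k)^((m+2) - (q : ℕ))) •
            append (rElt (k := k) x (m+2) (ι ∘ q.succAbove)) (x (ι q)) := rfl
    rw [start]
    have lhs_eq : ∑ q : Fin (m+3), ((-1 : k)^((m+2) - (q : ℕ))) •
            append (rElt (k := k) x (m+2) (ι ∘ q.succAbove)) (x (ι q))
        = ∑ q : Fin (m+3), ∑ p : Fin (m+2),
            ((-1 : k)^(((m+2) - (q : ℕ)) + (p : ℕ))) •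
              prepend (x ((ι ∘ q.succAbove) p))
                (append (rElt (k := k) x (m+1) ((ι ∘ q.succAbove) ∘ p.succAbove)) (x (ι q))) := by
      refine Finset.sum_congr rfl fun q _ => ?_
      rw [IH, append_sum, Finset.smul_sum]
      refine Finset.sum_congr rfl fun p _ => ?_
      rw [append_smul, smul_smul, ← pow_add, prepend_append]
    have rhs_eq : ∑ j : Fin (m+3), ((-1 : k)^((j : ℕ))) •
            prepend (x (ι j)) (rElt (k := k) x (m+2) (ι ∘ j.succAbove))
        = ∑ j : Fin (m+3), ∑ p : Fin (m+2),
            ((-1 : k)^((j : ℕ) + ((m+1) - (p : ℕ)))) •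
              prepend (x (ι j))
                (append (rElt (k := k) x (m+1) ((ι ∘ j.succAbove) ∘ p.succAbove))
                  (x ((ι ∘ j.succAbove) p))) := by
      refine Finset.sum_congr rfl fun j _ => ?_
      rw [rElt_right, prepend_sum, Finset.smul_sum]
      refine Finset.sum_congr rfl fun p _ => ?_
      rw [prepend_smul, smul_smul, ← pow_add]
    rw [lhs_eq, rhs_eq]
    refine ((Fintype.sum_prod_type (f := fun z : Fin (m+3) × Fin (m+2) =>
        ((-1 : k)^(((m+2) - (z.1 : ℕ)) + (z.2 : ℕ))) •
          prepend (x ((ι ∘ z.1.succAbove) z.2))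
            (append (rElt (k := k) x (m+1) ((ι ∘ z.1.succAbove) ∘ z.2.succAbove))
              (x (ι z.1))))).symm).trans
      ((Fintype.sum_equiv (phiEquiv (m+1)) _ _ ?_).trans
        (Fintype.sum_prod_type (f := fun z : Fin (m+3) × Fin (m+2) =>
          ((-1 : k)^((z.1 : ℕ) + ((m+1) - (z.2 : ℕ)))) •
            prepend (x (ι z.1))
              (append (rElt (k := k) x (m+1) ((ι ∘ z.1.succAbove) ∘ z.2.succAbove))
                (x ((ι ∘ z.1.succAbove) z.2))))))
    rintro ⟨q, p⟩
    have hcomp : (ι ∘ (q.succAbove p).succAbove) ∘ (auxQ q p).succAbove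
        = (ι ∘ q.succAbove) ∘ p.succAbove := by
      funext i
      simp only [Function.comp_apply]
      rw [← succAbove_succAbove_auxQ]
    simp only [phiEquiv, Equiv.coe_fn_mk, Function.comp_apply]
    rw [hcomp, succAbove_auxQ, auxQ_sign]

/-! ### Expansion of `DrVal` and `DlVal` -/

variable (K : Fin n → Fin n → Fin n → k)

lemma sum_rot3 {M : Type*} [AddCommMonoid M] {A B C : Type*} [Fintype A] [Fintype B] [Fintype C]
    (g : A → B → C → M) :
    ∑ s : A, ∑ t : B, ∑ p : C, g s t p = ∑ p : C, ∑ s : A, ∑ t : B, g s t p :=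
  (Finset.sum_congr rfl fun _ _ => Finset.sum_comm).trans Finset.sum_comm

lemma update_comp_succAbove {α : Type*} (ι : Fin (n+2) → α) (j : Fin (n+2)) (s : α) :
    Function.update ι j s ∘ j.succAbove = ι ∘ j.succAbove := by
  funext i
  simp only [Function.comp_apply, Function.update_of_ne (Fin.succAbove_ne j i)]

lemma update_comp_pair {α : Type*} [DecidableEq α] (ι : Fin (n+2) → α) (j : Fin (n+2))
    (p : Fin (n+1)) (s : α) :
    Function.update ι ((j.succAbove p).succAbove (auxQ j p)) s ∘ (j.succAbove p).succAbove
      = Function.update (ι ∘ (j.succAbove p).succAbove) (auxQ j p) s :=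
  Function.update_comp_eq_of_injective ι Fin.succAbove_right_injective _ s

lemma expandDr (m : ℕ) (ι : Fin (m+2) → Fin n) :
    DrVal (k := k) x K (m+2) ι
      = (∑ j : Fin (m+2), ∑ s : Fin n, ∑ t : Fin n,
            (((-1 : k)^((j : ℕ))) * K (ι j) s t) •
              prepend (x s) (append (rElt x (m+1) (ι ∘ j.succAbove)) (x t)))
        + ∑ j : Fin (m+2), ((-1 : k)^((j : ℕ))) •
            prepend (x (ι j)) (DrVal x K (m+1) (ι ∘ j.succAbove)) := by
  have h1 : ∀ (j : Fin (m+2)) (s t : Fin n),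
      K (ι j) s t • append (rElt (k := k) x (m+2) (Function.update ι j s)) (x t)
        = (((-1 : k)^((j : ℕ))) * K (ι j) s t) •
            prepend (x s) (append (rElt (k := k) x (m+1) (ι ∘ j.succAbove)) (x t))
          + ∑ p : Fin (m+1),
              (((-1 : k)^(((j.succAbove p) : ℕ))) * K (ι j) s t) •
                prepend (x (ι (j.succAbove p)))
                  (append (rElt (k := k) x (m+1)
                    (Function.update ι j s ∘ (j.succAbove p).succAbove)) (x t)) := by
    intro j s t
    rw [rElt_left, append_sum, Finset.smul_sum,
      Fin.sum_univ_succAbove (fun p : Fin (m+2) =>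
        K (ι j) s t • append (((-1 : k)^((p : ℕ))) •
          prepend (x (Function.update ι j s p))
            (rElt (k := k) x (m+1) (Function.update ι j s ∘ p.succAbove))) (x t)) j]
    congr 1
    · rw [Function.update_self, update_comp_succAbove, append_smul, smul_smul, mul_comm,
        ← prepend_append]
    · refine Finset.sum_congr rfl fun p _ => ?_
      rw [Function.update_of_ne (Fin.succAbove_ne j p), append_smul, smul_smul, mul_comm,
        ← prepend_append]
  calc DrVal (k := k) x K (m+2) ι
      = ∑ j : Fin (m+2), ∑ s : Fin n, ∑ t : Fin n,
          K (ι j) s t • append (rElt (k := k) x (m+2) (Function.update ι j s)) (x t) := rfl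
    _ = ∑ j : Fin (m+2), ∑ s : Fin n, ∑ t : Fin n,
          ((((-1 : k)^((j : ℕ))) * K (ι j) s t) •
            prepend (x s) (append (rElt (k := k) x (m+1) (ι ∘ j.succAbove)) (x t))
          + ∑ p : Fin (m+1),
              (((-1 : k)^(((j.succAbove p) : ℕ))) * K (ι j) s t) •
                prepend (x (ι (j.succAbove p)))
                  (append (rElt (k := k) x (m+1)
                    (Function.update ι j s ∘ (j.succAbove p).succAbove)) (x t))) := by
        exact Finset.sum_congr rfl fun j _ => Finset.sum_congr rfl fun s _ =>
          Finset.sum_congr rfl fun t _ => h1 j s t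
    _ = (∑ j : Fin (m+2), ∑ s : Fin n, ∑ t : Fin n,
            (((-1 : k)^((j : ℕ))) * K (ι j) s t) •
              prepend (x s) (append (rElt (k := k) x (m+1) (ι ∘ j.succAbove)) (x t)))
        + ∑ j : Fin (m+2), ∑ s : Fin n, ∑ t : Fin n, ∑ p : Fin (m+1),
            (((-1 : k)^(((j.succAbove p) : ℕ))) * K (ι j) s t) •
              prepend (x (ι (j.succAbove p)))
                (append (rElt (k := k) x (m+1)
                  (Function.update ι j s ∘ (j.succAbove p).succAbove)) (x t)) := by
        simp only [Finset.sum_add_distrib]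
    _ = _ := by
        congr 1
        have reorder : ∀ j : Fin (m+2),
            (∑ s : Fin n, ∑ t : Fin n, ∑ p : Fin (m+1),
              (((-1 : k)^(((j.succAbove p) : ℕ))) * K (ι j) s t) •
                prepend (x (ι (j.succAbove p)))
                  (append (rElt (k := k) x (m+1)
                    (Function.update ι j s ∘ (j.succAbove p).succAbove)) (x t)))
            = ∑ p : Fin (m+1), ∑ s : Fin n, ∑ t : Fin n,
              (((-1 : k)^(((j.succAbove p) : ℕ))) * K (ι j) s t) •
                prepend (x (ι (j.succAbove p)))
                  (append (rElt (k := k) x (m+1)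
                    (Function.update ι j s ∘ (j.succAbove p).succAbove)) (x t)) :=
          fun j => sum_rot3 _
        rw [Finset.sum_congr rfl fun j _ => reorder j]
        have rhs_expand : ∀ a : Fin (m+2),
            ((-1 : k)^((a : ℕ))) • prepend (x (ι a)) (DrVal (k := k) x K (m+1) (ι ∘ a.succAbove))
              = ∑ c : Fin (m+1), ∑ s : Fin n, ∑ t : Fin n,
                  (((-1 : k)^((a : ℕ))) * K (ι (a.succAbove c)) s t) •
                    prepend (x (ι a))
                      (append (rElt (k := k) x (m+1)
                        (Function.update (ι ∘ a.succAbove) c s)) (x t)) := by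
          intro a
          rw [show DrVal (k := k) x K (m+1) (ι ∘ a.succAbove)
              = ∑ c : Fin (m+1), ∑ s : Fin n, ∑ t : Fin n,
                  K ((ι ∘ a.succAbove) c) s t •
                    append (rElt (k := k) x (m+1)
                      (Function.update (ι ∘ a.succAbove) c s)) (x t) from rfl,
            prepend_sum, Finset.smul_sum]
          refine Finset.sum_congr rfl fun c _ => ?_
          rw [prepend_sum, Finset.smul_sum]
          refine Finset.sum_congr rfl fun s _ => ?_
          rw [prepend_sum, Finset.smul_sum]
          refine Finset.sum_congr rfl fun t _ => ?_
          rw [prepend_smul, smul_smul]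
          simp only [Function.comp_apply]
        rw [Finset.sum_congr rfl fun a _ => rhs_expand a]
        refine ((Fintype.sum_prod_type (f := fun z : Fin (m+2) × Fin (m+1) =>
            ∑ s : Fin n, ∑ t : Fin n,
              (((-1 : k)^(((z.1.succAbove z.2) : ℕ))) * K (ι z.1) s t) •
                prepend (x (ι (z.1.succAbove z.2)))
                  (append (rElt (k := k) x (m+1)
                    (Function.update ι z.1 s ∘ (z.1.succAbove z.2).succAbove)) (x t)))).symm).trans
          ((Fintype.sum_equiv (phiEquiv m) _ _ ?_).trans
            (Fintype.sum_prod_type (f := fun z : Fin (m+2) × Fin (m+1) =>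
              ∑ s : Fin n, ∑ t : Fin n,
                (((-1 : k)^((z.1 : ℕ))) * K (ι (z.1.succAbove z.2)) s t) •
                  prepend (x (ι z.1))
                    (append (rElt (k := k) x (m+1)
                      (Function.update (ι ∘ z.1.succAbove) z.2 s)) (x t)))))
        rintro ⟨j, p⟩
        have ha : (j.succAbove p).succAbove (auxQ j p) = j := succAbove_auxQ j p
        have h2 := update_comp_pair ι j p
        rw [ha] at h2
        simp only [phiEquiv, Equiv.coe_fn_mk]
        refine Finset.sum_congr rfl fun s _ => Finset.sum_congr rfl fun t _ => ?_
        rw [ha, h2 s]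

lemma expandDl (m : ℕ) (ι : Fin (m+2) → Fin n) :
    DlVal (k := k) x K (m+2) ι
      = (∑ j : Fin (m+2), ∑ s : Fin n, ∑ t : Fin n,
            (((-1 : k)^((m+1) - (j : ℕ))) * K (ι j) s t) •
              prepend (x s) (append (rElt x (m+1) (ι ∘ j.succAbove)) (x t)))
        + ∑ j : Fin (m+2), ((-1 : k)^((m+1) - (j : ℕ))) •
            append (DlVal x K (m+1) (ι ∘ j.succAbove)) (x (ι j)) := by
  have h1 : ∀ (j : Fin (m+2)) (s t : Fin n),
      K (ι j) s t • prepend (x s) (rElt (k := k) x (m+2) (Function.update ι j t))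
        = (((-1 : k)^((m+1) - (j : ℕ))) * K (ι j) s t) •
            prepend (x s) (append (rElt (k := k) x (m+1) (ι ∘ j.succAbove)) (x t))
          + ∑ p : Fin (m+1),
              (((-1 : k)^((m+1) - ((j.succAbove p) : ℕ))) * K (ι j) s t) •
                append (prepend (x s) (rElt (k := k) x (m+1)
                    (Function.update ι j t ∘ (j.succAbove p).succAbove)))
                  (x (ι (j.succAbove p))) := by
    intro j s t
    rw [rElt_right, prepend_sum, Finset.smul_sum,
      Fin.sum_univ_succAbove (fun p : Fin (m+2) =>
        K (ι j) s t • prepend (x s) (((-1 : k)^((m+1) - (p : ℕ))) •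
          append (rElt (k := k) x (m+1) (Function.update ι j t ∘ p.succAbove))
            (x (Function.update ι j t p)))) j]
    congr 1
    · rw [Function.update_self, update_comp_succAbove, prepend_smul, smul_smul, mul_comm]
    · refine Finset.sum_congr rfl fun p _ => ?_
      rw [Function.update_of_ne (Fin.succAbove_ne j p), prepend_smul, smul_smul, mul_comm,
        prepend_append]
  calc DlVal (k := k) x K (m+2) ι
      = ∑ j : Fin (m+2), ∑ s : Fin n, ∑ t : Fin n,
          K (ι j) s t • prepend (x s) (rElt (k := k) x (m+2) (Function.update ι j t)) := rfl
    _ = ∑ j : Fin (m+2), ∑ s : Fin n, ∑ t : Fin n,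
          ((((-1 : k)^((m+1) - (j : ℕ))) * K (ι j) s t) •
            prepend (x s) (append (rElt (k := k) x (m+1) (ι ∘ j.succAbove)) (x t))
          + ∑ p : Fin (m+1),
              (((-1 : k)^((m+1) - ((j.succAbove p) : ℕ))) * K (ι j) s t) •
                append (prepend (x s) (rElt (k := k) x (m+1)
                    (Function.update ι j t ∘ (j.succAbove p).succAbove)))
                  (x (ι (j.succAbove p)))) := by
        exact Finset.sum_congr rfl fun j _ => Finset.sum_congr rfl fun s _ =>
          Finset.sum_congr rfl fun t _ => h1 j s t
    _ = (∑ j : Fin (m+2), ∑ s : Fin n, ∑ t : Fin n,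
            (((-1 : k)^((m+1) - (j : ℕ))) * K (ι j) s t) •
              prepend (x s) (append (rElt (k := k) x (m+1) (ι ∘ j.succAbove)) (x t)))
        + ∑ j : Fin (m+2), ∑ s : Fin n, ∑ t : Fin n, ∑ p : Fin (m+1),
            (((-1 : k)^((m+1) - ((j.succAbove p) : ℕ))) * K (ι j) s t) •
              append (prepend (x s) (rElt (k := k) x (m+1)
                  (Function.update ι j t ∘ (j.succAbove p).succAbove)))
                (x (ι (j.succAbove p))) := by
        simp only [Finset.sum_add_distrib]
    _ = _ := by
        congr 1
        rw [Finset.sum_congr rfl fun j _ => sum_rot3 (fun s t p =>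
          (((-1 : k)^((m+1) - ((j.succAbove p) : ℕ))) * K (ι j) s t) •
            append (prepend (x s) (rElt (k := k) x (m+1)
                (Function.update ι j t ∘ (j.succAbove p).succAbove)))
              (x (ι (j.succAbove p))))]
        have rhs_expand : ∀ a : Fin (m+2),
            ((-1 : k)^((m+1) - (a : ℕ))) •
                append (DlVal (k := k) x K (m+1) (ι ∘ a.succAbove)) (x (ι a))
              = ∑ c : Fin (m+1), ∑ s : Fin n, ∑ t : Fin n,
                  (((-1 : k)^((m+1) - (a : ℕ))) * K (ι (a.succAbove c)) s t) •
                    append (prepend (x s) (rElt (k := k) x (m+1)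
                        (Function.update (ι ∘ a.succAbove) c t))) (x (ι a)) := by
          intro a
          rw [show DlVal (k := k) x K (m+1) (ι ∘ a.succAbove)
              = ∑ c : Fin (m+1), ∑ s : Fin n, ∑ t : Fin n,
                  K ((ι ∘ a.succAbove) c) s t •
                    prepend (x s) (rElt (k := k) x (m+1)
                      (Function.update (ι ∘ a.succAbove) c t)) from rfl,
            append_sum, Finset.smul_sum]
          refine Finset.sum_congr rfl fun c _ => ?_
          rw [append_sum, Finset.smul_sum]
          refine Finset.sum_congr rfl fun s _ => ?_
          rw [append_sum, Finset.smul_sum]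
          refine Finset.sum_congr rfl fun t _ => ?_
          rw [append_smul, smul_smul]
          simp only [Function.comp_apply]
        rw [Finset.sum_congr rfl fun a _ => rhs_expand a]
        refine ((Fintype.sum_prod_type (f := fun z : Fin (m+2) × Fin (m+1) =>
            ∑ s : Fin n, ∑ t : Fin n,
              (((-1 : k)^((m+1) - ((z.1.succAbove z.2) : ℕ))) * K (ι z.1) s t) •
                append (prepend (x s) (rElt (k := k) x (m+1)
                    (Function.update ι z.1 t ∘ (z.1.succAbove z.2).succAbove)))
                  (x (ι (z.1.succAbove z.2))))).symm).trans
          ((Fintype.sum_equiv (phiEquiv m) _ _ ?_).trans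
            (Fintype.sum_prod_type (f := fun z : Fin (m+2) × Fin (m+1) =>
              ∑ s : Fin n, ∑ t : Fin n,
                (((-1 : k)^((m+1) - ((z.1 : ℕ)))) * K (ι (z.1.succAbove z.2)) s t) •
                  append (prepend (x s) (rElt (k := k) x (m+1)
                      (Function.update (ι ∘ z.1.succAbove) z.2 t))) (x (ι z.1)))))
        rintro ⟨j, p⟩
        have ha : (j.succAbove p).succAbove (auxQ j p) = j := succAbove_auxQ j p
        have h2 := update_comp_pair ι j p
        rw [ha] at h2
        simp only [phiEquiv, Equiv.coe_fn_mk]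
        refine Finset.sum_congr rfl fun s _ => Finset.sum_congr rfl fun t _ => ?_
        rw [ha, h2 t]

end Aux

lemma cancel_aux {M : Type*} [AddCommGroup M] [Module k M] (e : k) (S1 C S2 D : M)
    (h : S1 + e • S2 = 0) : (S1 + C) + e • (S2 + D) = C + e • D := by
  rw [smul_add, show (S1 + C) + (e • S2 + e • D) = (S1 + e • S2) + (C + e • D) from by abel,
    h, zero_add]

/-- The maps `D_{m,r}, D_{m,l}` of Lemma 4.3 form a sequence pair (with `σ = id`):
`D_{m,r} + (−1)^m D_{m,l} = (id_V ⊗ D_{m−1,r}) + (−1)^m (D_{m−1,l} ⊗ id_V)` as linear maps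
`W_m → V^{⊗(m+1)}` for every `m ≥ 2`.  Evaluated on the basis element `r_{i_1 ⋯ i_m}`
(with `i_1 < ⋯ < i_m`), the right-hand side is computed via the expansions
`r_{i_1⋯i_m} = ∑_j (−1)^{j+1} x_{i_j} ⊗ r_{…î_j…} = ∑_j (−1)^{m−j} r_{…î_j…} ⊗ x_{i_j}`. -/
theorem lemma_4_3_pair {n : ℕ} (hn : 2 ≤ n) (b : Module.Basis (Fin n) k V)
    (K : Fin n → Fin n → Fin n → k)
    (m : ℕ) (ι : Fin (m+2) → Fin n) (hι : StrictMono ι) :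
    DrVal (fun i => b i) K (m+2) ι + ((-1 : k)^(m+2)) • DlVal (fun i => b i) K (m+2) ι
      = (∑ j : Fin (m+2), ((-1 : k)^((j : ℕ))) •
            (prepend (b (ι j)) (DrVal (fun i => b i) K (m+1) (ι ∘ j.succAbove))
              : ⨂[k]^(m+3) V))
        + ((-1 : k)^(m+2)) •
            ∑ j : Fin (m+2), ((-1 : k)^((m+1) - (j : ℕ))) •
              (append (DlVal (fun i => b i) K (m+1) (ι ∘ j.succAbove)) (b (ι j))
                : ⨂[k]^(m+3) V) := by
  rw [expandDr (fun i => b i) K m ι, expandDl (fun i => b i) K m ι]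
  refine cancel_aux ((-1 : k)^(m+2)) _ _ _ _ ?_
  have hs : ∀ j : Fin (m+2),
      (-1 : k)^((j : ℕ)) + (-1 : k)^(m+2) * (-1 : k)^((m+1) - (j : ℕ)) = 0 := by
    intro j
    rw [← pow_add,
      show (m+2) + ((m+1) - (j : ℕ)) = 2*((m+1) - (j : ℕ)) + ((j : ℕ)+1) from by
        have := j.isLt; omega,
      pow_add, pow_mul, neg_one_sq, one_pow, one_mul, pow_succ]
    ring
  simp only [Finset.smul_sum]
  simp only [← Finset.sum_add_distrib]
  refine Finset.sum_eq_zero fun j _ => Finset.sum_eq_zero fun s _ =>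
    Finset.sum_eq_zero fun t _ => ?_
  rw [smul_smul, ← add_smul]
  have hz : (-1 : k)^((j : ℕ)) * K (ι j) s t
      + (-1 : k)^(m+2) * ((-1 : k)^((m+1) - (j : ℕ)) * K (ι j) s t) = 0 := by
    linear_combination K (ι j) s t * hs j
  rw [hz, zero_smul]

end OrePaper
end
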